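/- Single-level-up property of the modified MWHVC algorithm: if in each iteration the dual increase for each vertex v not in the cover is δ_{i−1}(e) = δ_{i−2}(e) + deal_{i−1}(e)/2 for e ∈ E'(v), where Σ_{e∈E'(v)} deal_{i−1}(e) ≤ 0.5^{ℓ_{i−1}(v)+1}·w(v) and Σ_{e∈E(v)} δ_{i−2}(e) ≤ (1 − 0.5^{ℓ_{i−1}(v)+1})·w(v), then Σ_{e∈E(v)} δ_{i−1}(e) ≤ (1 − 0.5^{(ℓ_{i−1}(v)+1)+1})·w(v); consequently the level of v increases by at most 1 per iteration: ℓ_i(v) ≤ ℓ_{i−1}(v) + 1. -/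
import Mathlib


open Finset

/-- Single-level-up property of the modified MWHVC algorithm: raising the duals by half
the deals keeps `Σ_{e∈E(v)} δ_{i−1}(e) ≤ (1 − 0.5^{(ℓ_{i−1}(v)+1)+1})·w(v)`, so the
level of `v` (the level reached by the while loop, which increments while
`Σ δ > w(v)(1 − 0.5^{ℓ+1})`) increases by at most `1` per iteration. Here `k` plays the
role of `ℓ_{i−1}(v)`, `Ev = E(v)`, `E' = E'(v)`. -/
theorem stmt_13 {ι : Type*} [DecidableEq ι] (Ev E' : Finset ι) (hE' : E' ⊆ Ev)
    (w : ℝ) (hw : 0 < w) (k : ℕ)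
    (δold δnew deal : ι → ℝ) (hdeal : ∀ e ∈ E', 0 ≤ deal e)
    (hnew : ∀ e ∈ Ev, δnew e = δold e + (if e ∈ E' then deal e / 2 else 0))
    (hvault : ∑ e ∈ E', deal e ≤ (0.5:ℝ) ^ (k+1) * w)
    (hold : ∑ e ∈ Ev, δold e ≤ (1 - (0.5:ℝ) ^ (k+1)) * w) :
    (∑ e ∈ Ev, δnew e ≤ (1 - (0.5:ℝ) ^ ((k+1)+1)) * w) ∧
    (∀ ℓ' : ℕ, (∀ ℓ'' < ℓ', w * (1 - (0.5:ℝ) ^ (ℓ''+1)) < ∑ e ∈ Ev, δnew e) →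
      ℓ' ≤ k + 1) := by
  have hsum : ∑ e ∈ Ev, δnew e = ∑ e ∈ Ev, δold e + (∑ e ∈ E', deal e) / 2 := by
    rw [Finset.sum_congr rfl hnew, Finset.sum_add_distrib,
      Finset.sum_ite_mem, Finset.inter_eq_right.mpr hE', Finset.sum_div]
  have h1 : ∑ e ∈ Ev, δnew e ≤ (1 - (0.5:ℝ) ^ ((k+1)+1)) * w := by
    rw [hsum]
    have : (∑ e ∈ E', deal e) / 2 ≤ (0.5:ℝ) ^ (k+1) * w / 2 := by linarith
    calc ∑ e ∈ Ev, δold e + (∑ e ∈ E', deal e) / 2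
        ≤ (1 - (0.5:ℝ) ^ (k+1)) * w + (0.5:ℝ) ^ (k+1) * w / 2 := by linarith
      _ = (1 - (0.5:ℝ) ^ ((k+1)+1)) * w := by ring
  refine ⟨h1, fun ℓ' hℓ' => ?_⟩
  by_contra h
  have hk : k + 1 < ℓ' := by omega
  have := hℓ' (k+1) hk
  nlinarith [h1]
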